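/- Let n ≥ 2 and l ≥ 1, let a = (a_1 ≤ … ≤ a_l) and b = (b_1 ≤ … ≤ b_l) be elements of B_l, and let d be an integer with 0 ≤ d ≤ l. Then H_l(a,b) ≤ d if and only if a_i < b_{i+d} for every i with 1 ≤ i ≤ l − d. -/

import Mathlib

/-!
Energy function of the level-`l` `U_q(sl_n)` vertex model.

`B_l` is the set of weakly increasing sequences `a = (a_0 ≤ … ≤ a_{l-1})`
(0-indexed) with entries in `{1,…,n}`, encoded as functions `a : ℕ → ℕ`
that are weakly increasing on the first `l` values, take values in `[1,n]`
there, and are `0` elsewhere.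
-/

/-- `H_1(a,b) = 0` if `a < b`, `1` otherwise. -/
def H1 (a b : ℕ) : ℕ := if a < b then 0 else 1

/-- The energy function `H_l(a,b) = min_σ Σ_i H_1(a_i, b_{σ(i)})`. -/
noncomputable def Hl (l : ℕ) (a b : ℕ → ℕ) : ℕ :=
  Finset.univ.inf' ⟨1, Finset.mem_univ _⟩
    (fun σ : Equiv.Perm (Fin l) => ∑ i : Fin l, H1 (a i) (b (σ i)))

/-- Membership in `B_l` (with entries in `{1,…,n}`), in the 0-indexed encoding. -/
def IsBRow (n l : ℕ) (a : ℕ → ℕ) : Prop :=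
  (∀ k, k + 1 < l → a k ≤ a (k + 1)) ∧ (∀ k, k < l → 1 ≤ a k ∧ a k ≤ n) ∧
    (∀ k, l ≤ k → a k = 0)

private lemma sum_indicator_ge (L k : ℕ) :
    ∑ i ∈ Finset.range L, (if k ≤ i then (1 : ℕ) else 0) = L - min k L := by
  induction L with
  | zero => simp
  | succ L ih =>
    rw [Finset.sum_range_succ, ih]
    by_cases h : k ≤ L
    · rw [if_pos h]; omega
    · rw [if_neg h]; omega

private lemma sum_indicator_le (L k : ℕ) :
    ∑ i ∈ Finset.range L, (if i ≤ k then (1 : ℕ) else 0) = min (k + 1) L := by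
  induction L with
  | zero => simp
  | succ L ih =>
    rw [Finset.sum_range_succ, ih]
    by_cases h : L ≤ k
    · rw [if_pos h]; omega
    · rw [if_neg h]; omega

private lemma isBRow_mono {n l : ℕ} {a : ℕ → ℕ} (ha : IsBRow n l a) :
    ∀ j, j < l → ∀ i, i ≤ j → a i ≤ a j := by
  intro j hj
  induction j with
  | zero =>
    intro i hi
    have : i = 0 := Nat.le_zero.mp hi
    simp [this]
  | succ j ih =>
    intro i hi
    rcases Nat.lt_or_ge i (j + 1) with h | h
    · exact le_trans (ih (by omega) i (by omega)) (ha.1 j hj)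
    · have : i = j + 1 := by omega
      simp [this]

private lemma H1_le_one (a b : ℕ) : H1 a b ≤ 1 := by
  unfold H1; split <;> omega

private lemma H1_eq_zero {a b : ℕ} (h : a < b) : H1 a b = 0 := by
  unfold H1; rw [if_pos h]

private lemma H1_eq_one {a b : ℕ} (h : b ≤ a) : H1 a b = 1 := by
  unfold H1; rw [if_neg (by omega)]

/-- For `a, b ∈ B_l` and `0 ≤ d ≤ l`, one has `H_l(a,b) ≤ d`
iff `a_i < b_{i+d}` for all `1 ≤ i ≤ l - d` (0-indexed: for all `i` with `i + d < l`). -/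
theorem energy_le_iff (n l : ℕ) (hn : 2 ≤ n) (hl : 1 ≤ l)
    (a b : ℕ → ℕ) (ha : IsBRow n l a) (hb : IsBRow n l b)
    (d : ℕ) (hd : d ≤ l) :
    Hl l a b ≤ d ↔ ∀ i : ℕ, i + d < l → a i < b (i + d) := by
  classical
  haveI : NeZero l := ⟨by omega⟩
  unfold Hl
  constructor
  · intro h i hid
    by_contra hcon
    push_neg at hcon
    obtain ⟨σ, -, hσ⟩ := (Finset.inf'_le_iff _).mp h
    -- the set of bad positions
    set S : Finset (Fin l) :=
      Finset.univ.filter (fun x : Fin l => i ≤ (x : ℕ) ∧ ((σ x : Fin l) : ℕ) ≤ i + d) with hSdef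
    have h1 : (Finset.univ.filter (fun x : Fin l => i ≤ (x : ℕ))).card = l - i := by
      rw [Finset.card_filter,
        Fin.sum_univ_eq_sum_range (fun k => if i ≤ k then (1 : ℕ) else 0) l,
        sum_indicator_ge]
      omega
    have h2 : (Finset.univ.filter (fun x : Fin l => ((σ x : Fin l) : ℕ) ≤ i + d)).card
        = i + d + 1 := by
      rw [Finset.card_filter]
      have := Equiv.sum_comp σ (fun x : Fin l => if (x : ℕ) ≤ i + d then (1 : ℕ) else 0)
      rw [this, Fin.sum_univ_eq_sum_range (fun k => if k ≤ i + d then (1 : ℕ) else 0) l,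
        sum_indicator_le]
      omega
    have hcard : d + 1 ≤ S.card := by
      have hinter : S = (Finset.univ.filter (fun x : Fin l => i ≤ (x : ℕ))) ∩
          (Finset.univ.filter (fun x : Fin l => ((σ x : Fin l) : ℕ) ≤ i + d)) := by
        rw [hSdef, Finset.filter_and]
      have hU := Finset.card_inter_add_card_union
        (Finset.univ.filter (fun x : Fin l => i ≤ (x : ℕ)))
        (Finset.univ.filter (fun x : Fin l => ((σ x : Fin l) : ℕ) ≤ i + d))
      have hle : ((Finset.univ.filter (fun x : Fin l => i ≤ (x : ℕ))) ∪
          (Finset.univ.filter (fun x : Fin l => ((σ x : Fin l) : ℕ) ≤ i + d))).card ≤ l := by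
        have := Finset.card_le_univ ((Finset.univ.filter (fun x : Fin l => i ≤ (x : ℕ))) ∪
          (Finset.univ.filter (fun x : Fin l => ((σ x : Fin l) : ℕ) ≤ i + d)))
        simpa using this
      rw [hinter]
      omega
    have hterm : ∀ x ∈ S, H1 (a x) (b (σ x)) = 1 := by
      intro x hx
      rw [hSdef, Finset.mem_filter] at hx
      obtain ⟨-, hix, hσx⟩ := hx
      apply H1_eq_one
      have hb1 : b (σ x) ≤ b (i + d) := isBRow_mono hb (i + d) hid _ hσx
      have ha1 : a i ≤ a x := isBRow_mono ha x x.isLt i hix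
      omega
    have hsum : S.card ≤ ∑ x : Fin l, H1 (a x) (b (σ x)) := by
      calc S.card = ∑ x ∈ S, H1 (a x) (b (σ x)) := by
            rw [Finset.sum_congr rfl hterm]; simp
        _ ≤ ∑ x : Fin l, H1 (a x) (b (σ x)) :=
            Finset.sum_le_sum_of_subset (Finset.subset_univ S)
    omega
  · intro h
    set σ₀ : Equiv.Perm (Fin l) := Equiv.addRight (Fin.ofNat l d) with hσ₀
    refine le_trans (Finset.inf'_le _ (Finset.mem_univ σ₀)) ?_
    calc ∑ x : Fin l, H1 (a x) (b (σ₀ x))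
        ≤ ∑ x : Fin l, (if (x : ℕ) + d < l then (0 : ℕ) else 1) := by
          apply Finset.sum_le_sum
          intro x _
          by_cases hx : (x : ℕ) + d < l
          · rw [if_pos hx]
            have hdl : d < l := by omega
            have hv : ((σ₀ x : Fin l) : ℕ) = (x : ℕ) + d := by
              have : ((σ₀ x : Fin l) : ℕ) = ((x : ℕ) + d % l) % l := by
                simp [hσ₀, Fin.val_add, Fin.val_ofNat]
              rw [Nat.mod_eq_of_lt hdl] at this
              rw [this, Nat.mod_eq_of_lt hx]
            rw [hv]
            exact Nat.le_of_eq (H1_eq_zero (h x hx))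
          · rw [if_neg hx]
            exact H1_le_one _ _
      _ = d := by
          have heq : ∑ x : Fin l, (if (x : ℕ) + d < l then (0 : ℕ) else 1)
              = ∑ x : Fin l, (if l - d ≤ (x : ℕ) then (1 : ℕ) else 0) := by
            apply Finset.sum_congr rfl
            intro x _
            by_cases hx : (x : ℕ) + d < l
            · rw [if_pos hx, if_neg (by omega)]
            · rw [if_neg hx, if_pos (by omega)]
          rw [heq, Fin.sum_univ_eq_sum_range (fun k => if l - d ≤ k then (1 : ℕ) else 0) l,
            sum_indicator_ge]
          omega
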